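/- If α and β are real numbers in [0,3] such that (tan x/x)^α ≤ 3(tan x − x)/x³ ≤ (tan x/x)^β for all x in (0, π/2), then α ≤ 1 and β ≥ 6/5. -/

import Mathlib

open Real

lemma aux_nonneg {f f' : ℝ → ℝ} (hder : ∀ t, HasDerivAt f (f' t) t) (h0 : f 0 = 0)
    (hnn : ∀ t, 0 ≤ t → 0 ≤ f' t) {x : ℝ} (hx : 0 ≤ x) : 0 ≤ f x := by
  have hdiff : Differentiable ℝ f := fun t => (hder t).differentiableAt
  have hm : MonotoneOn f (Set.Ici 0) := by
    apply monotoneOn_of_deriv_nonneg (convex_Ici 0) hdiff.continuous.continuousOn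
      hdiff.differentiableOn
    intro t ht
    rw [interior_Ici] at ht
    rw [(hder t).deriv]
    exact hnn t ht.le
  calc (0:ℝ) = f 0 := h0.symm
  _ ≤ f x := hm (Set.self_mem_Ici) hx hx

lemma sin_ge3 {x : ℝ} (hx : 0 ≤ x) : x - x^3/6 ≤ Real.sin x := by
  have := aux_nonneg (f := fun t => Real.sin t - (t - t^3/6))
    (f' := fun t => Real.cos t - (1 - t^2/2))
    (fun t => by
      have h := (Real.hasDerivAt_sin t).sub ((hasDerivAt_id t).sub ((hasDerivAt_pow 3 t).div_const 6))
      refine h.congr_deriv ?_; push_cast; ring)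
    (by norm_num)
    (fun t _ => by have := Real.one_sub_sq_div_two_le_cos (x := t); linarith) hx
  linarith [this]

lemma cos_le4 {x : ℝ} (hx : 0 ≤ x) : Real.cos x ≤ 1 - x^2/2 + x^4/24 := by
  have := aux_nonneg (f := fun t => (1 - t^2/2 + t^4/24) - Real.cos t)
    (f' := fun t => (- t + t^3/6) + Real.sin t)
    (fun t => by
      have h := (((hasDerivAt_const t (1:ℝ)).sub ((hasDerivAt_pow 2 t).div_const 2)).add
        ((hasDerivAt_pow 4 t).div_const 24)).sub (Real.hasDerivAt_cos t)
      refine h.congr_deriv ?_; push_cast; ring)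
    (by norm_num)
    (fun t ht => by have := sin_ge3 ht; linarith) hx
  linarith [this]

lemma sin_le5 {x : ℝ} (hx : 0 ≤ x) : Real.sin x ≤ x - x^3/6 + x^5/120 := by
  have := aux_nonneg (f := fun t => (t - t^3/6 + t^5/120) - Real.sin t)
    (f' := fun t => (1 - t^2/2 + t^4/24) - Real.cos t)
    (fun t => by
      have h := (((hasDerivAt_id t).sub ((hasDerivAt_pow 3 t).div_const 6)).add
        ((hasDerivAt_pow 5 t).div_const 120)).sub (Real.hasDerivAt_sin t)
      refine h.congr_deriv ?_; push_cast; ring)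
    (by norm_num)
    (fun t ht => by have := cos_le4 ht; linarith) hx
  linarith [this]

lemma cos_ge6 {x : ℝ} (hx : 0 ≤ x) : 1 - x^2/2 + x^4/24 - x^6/720 ≤ Real.cos x := by
  have := aux_nonneg (f := fun t => Real.cos t - (1 - t^2/2 + t^4/24 - t^6/720))
    (f' := fun t => (t - t^3/6 + t^5/120) - Real.sin t)
    (fun t => by
      have h := (Real.hasDerivAt_cos t).sub ((((hasDerivAt_const t (1:ℝ)).sub
        ((hasDerivAt_pow 2 t).div_const 2)).add ((hasDerivAt_pow 4 t).div_const 24)).sub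
        ((hasDerivAt_pow 6 t).div_const 720))
      refine h.congr_deriv ?_; push_cast; ring)
    (by norm_num)
    (fun t ht => by have := sin_le5 ht; linarith) hx
  linarith [this]

lemma sin_ge7 {x : ℝ} (hx : 0 ≤ x) : x - x^3/6 + x^5/120 - x^7/5040 ≤ Real.sin x := by
  have := aux_nonneg (f := fun t => Real.sin t - (t - t^3/6 + t^5/120 - t^7/5040))
    (f' := fun t => Real.cos t - (1 - t^2/2 + t^4/24 - t^6/720))
    (fun t => by
      have h := (Real.hasDerivAt_sin t).sub ((((hasDerivAt_id t).sub
        ((hasDerivAt_pow 3 t).div_const 6)).add ((hasDerivAt_pow 5 t).div_const 120)).sub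
        ((hasDerivAt_pow 7 t).div_const 5040))
      refine h.congr_deriv ?_; push_cast; ring)
    (by norm_num)
    (fun t ht => by have := cos_ge6 ht; linarith) hx
  linarith [this]

-- tan bounds for small x
lemma tan_ge {x : ℝ} (hx : 0 < x) (hx1 : x ≤ 1/2) :
    x + x^3/3 + 2*x^5/15 ≤ Real.tan x := by
  have hxpi : x < π/2 := by nlinarith [Real.pi_gt_three]
  have hcos : 0 < Real.cos x := Real.cos_pos_of_mem_Ioo ⟨by linarith, hxpi⟩
  rw [Real.tan_eq_sin_div_cos, le_div_iff₀ hcos]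
  have h1 := sin_ge7 hx.le
  have h2 := cos_le4 hx.le
  have hp : (0:ℝ) ≤ x + x^3/3 + 2*x^5/15 := by positivity
  have h3 := mul_le_mul_of_nonneg_left h2 hp
  have hx2 : x^2 ≤ 1/4 := by nlinarith
  have h4 : (x + x^3/3 + 2*x^5/15) * (1 - x^2/2 + x^4/24) ≤ x - x^3/6 + x^5/120 - x^7/5040 := by
    nlinarith [mul_nonneg (pow_pos hx 7).le (by linarith : (0:ℝ) ≤ 1/4 - x^2), pow_pos hx 7]
  linarith

lemma tan_le {x : ℝ} (hx : 0 < x) (hx1 : x ≤ 1/2) :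
    Real.tan x ≤ x + x^3/3 + x^5 := by
  have hxpi : x < π/2 := by nlinarith [Real.pi_gt_three]
  have hcos : 0 < Real.cos x := Real.cos_pos_of_mem_Ioo ⟨by linarith, hxpi⟩
  rw [Real.tan_eq_sin_div_cos, div_le_iff₀ hcos]
  have h1 := sin_le5 hx.le
  have h2 := cos_ge6 hx.le
  have hp : (0:ℝ) ≤ x + x^3/3 + x^5 := by positivity
  have h3 := mul_le_mul_of_nonneg_left h2 hp
  have hx2 : x^2 ≤ 1/4 := by nlinarith
  have h4 : x - x^3/6 + x^5/120 ≤ (x + x^3/3 + x^5) * (1 - x^2/2 + x^4/24 - x^6/720) := by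
    nlinarith [mul_nonneg (pow_pos hx 5).le (by linarith : (0:ℝ) ≤ 1/4 - x^2),
      mul_nonneg (pow_pos hx 9).le (by linarith : (0:ℝ) ≤ 1/4 - x^2),
      pow_pos hx 5, pow_pos hx 7, pow_pos hx 9]
  linarith

lemma key_ineq {u β : ℝ} (hu : 0 < u) (hu4 : u ≤ 1/4) (hβ0 : 0 ≤ β)
    (huε : u ≤ (6/5 - β)/9) : (u/3 + u^2) * β < (2*u/5) / (1 + 2*u/5) := by
  rw [lt_div_iff₀ (by positivity : (0:ℝ) < 1 + 2*u/5)]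
  nlinarith [mul_nonneg (by linarith : (0:ℝ) ≤ 6/5 - 9*u - β)
      (by positivity : (0:ℝ) ≤ (u/3 + u^2) * (1 + 2*u/5)),
    mul_pos hu hu, mul_nonneg (mul_nonneg hu.le hu.le) hu.le]

set_option maxHeartbeats 1000000 in
theorem best_exponents (α β : ℝ) (hα : α ∈ Set.Icc (0 : ℝ) 3) (hβ : β ∈ Set.Icc (0 : ℝ) 3)
    (h : ∀ x : ℝ, 0 < x → x < Real.pi / 2 →
      (Real.tan x / x) ^ α ≤ 3 * (Real.tan x - x) / x ^ 3 ∧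
      3 * (Real.tan x - x) / x ^ 3 ≤ (Real.tan x / x) ^ β) :
    α ≤ 1 ∧ 6 / 5 ≤ β := by
  obtain ⟨hα0, hα3⟩ := hα
  obtain ⟨hβ0, hβ3⟩ := hβ
  constructor
  · -- α ≤ 1, via x → π/2
    by_contra hα1
    push_neg at hα1
    set M : ℝ := max 2 ((12:ℝ) ^ ((α - 1)⁻¹)) with hM
    have h1pi : (1:ℝ) < π / 2 := by nlinarith [Real.pi_gt_three]
    have hev1 : ∀ᶠ x in nhdsWithin (π/2) (Set.Iio (π/2)), M < Real.tan x :=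
      Real.tendsto_tan_pi_div_two.eventually_gt_atTop M
    have hev2 : Set.Ioo (1:ℝ) (π/2) ∈ nhdsWithin (π/2) (Set.Iio (π/2)) :=
      Ioo_mem_nhdsLT_of_mem ⟨h1pi, le_refl _⟩
    obtain ⟨x, htan, hx1, hxlt⟩ := (hev1.and hev2).exists
    have hx0 : 0 < x := lt_trans one_pos hx1
    have ht2 : (2:ℝ) ≤ M := le_max_left _ _
    have ht0 : 0 < Real.tan x := lt_trans (by linarith) htan
    obtain ⟨hle, -⟩ := h x hx0 hxlt
    have hpi2 : π / 2 < 2 := by nlinarith [Real.pi_lt_d2]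
    have hxtan : x ≤ Real.tan x := by linarith
    -- upper bound on RHS
    have hx3 : (1:ℝ) ≤ x ^ 3 := by
      nlinarith [mul_nonneg (by linarith : (0:ℝ) ≤ x - 1) (by positivity : (0:ℝ) ≤ x^2 + x + 1)]
    have hrhs : 3 * (Real.tan x - x) / x ^ 3 ≤ 3 * Real.tan x := by
      have h1 : 3 * (Real.tan x - x) / x ^ 3 ≤ 3 * (Real.tan x - x) :=
        div_le_self (by nlinarith) hx3
      linarith
    -- lower bound on LHS
    have hxa : x ^ α ≤ 4 := by
      have h1 : x ^ α ≤ (π/2) ^ α :=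
        Real.rpow_le_rpow hx0.le hxlt.le hα0
      have h2 : (π/2) ^ α ≤ (π/2) ^ (3:ℝ) :=
        Real.rpow_le_rpow_of_exponent_le h1pi.le hα3
      have h3 : ((π/2):ℝ) ^ (3:ℝ) = (π/2) ^ (3:ℕ) := by
        rw [← Real.rpow_natCast]; norm_num
      have h5 : (π/2:ℝ) ≤ 1.575 := by linarith [Real.pi_lt_d2]
      have h6 := pow_le_pow_left₀ (by positivity : (0:ℝ) ≤ π/2) h5 3
      have h4 : ((π/2):ℝ) ^ (3:ℕ) ≤ 4 := by norm_num at h6 ⊢; linarith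
      linarith [h1.trans (h2.trans (h3.le.trans h4))]
    have hxapos : 0 < x ^ α := Real.rpow_pos_of_pos hx0 _
    have hlhs : Real.tan x ^ α / 4 ≤ (Real.tan x / x) ^ α := by
      rw [Real.div_rpow ht0.le hx0.le]
      apply div_le_div_of_nonneg_left (Real.rpow_pos_of_pos ht0 _).le hxapos hxa
    -- combine
    have hkey : Real.tan x ^ α ≤ 12 * Real.tan x := by
      have := hlhs.trans (hle.trans hrhs)
      rw [div_le_iff₀ (by norm_num : (0:ℝ) < 4)] at this
      linarith
    have hsplit : Real.tan x ^ α = Real.tan x ^ (α - 1) * Real.tan x := by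
      rw [← Real.rpow_add_one ht0.ne']
      ring_nf
    have hlt12 : Real.tan x ^ (α - 1) ≤ 12 := by
      calc Real.tan x ^ (α - 1) = Real.tan x ^ (α - 1) * Real.tan x * (Real.tan x)⁻¹ := by
            field_simp
        _ ≤ 12 * Real.tan x * (Real.tan x)⁻¹ := by
            apply mul_le_mul_of_nonneg_right _ (inv_pos.2 ht0).le
            rw [← hsplit]; exact hkey
        _ = 12 := by field_simp
    have hgt12 : (12:ℝ) < Real.tan x ^ (α - 1) := by
      have hα1' : 0 < α - 1 := by linarith
      have h1 : ((12:ℝ) ^ ((α - 1)⁻¹)) ^ (α - 1) < Real.tan x ^ (α - 1) := by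
        apply Real.rpow_lt_rpow (Real.rpow_nonneg (by norm_num) _) _ hα1'
        exact lt_of_le_of_lt (le_max_right _ _) htan
      have h2 : ((12:ℝ) ^ ((α - 1)⁻¹)) ^ (α - 1) = 12 := by
        rw [← Real.rpow_mul (by norm_num : (0:ℝ) ≤ 12),
          inv_mul_cancel₀ (by positivity : (α - 1) ≠ 0), Real.rpow_one]
      linarith
    linarith
  · -- 6/5 ≤ β, via x → 0
    by_contra hβ1
    push_neg at hβ1
    set ε : ℝ := 6/5 - β with hε
    have hεpos : 0 < ε := by simp [hε]; linarith
    obtain ⟨x, hx0, hx12, hxε⟩ : ∃ x : ℝ, 0 < x ∧ x ≤ 1/2 ∧ x ^ 2 ≤ ε / 9 := by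
      refine ⟨min (1/2) (Real.sqrt ε / 3), lt_min (by norm_num) (by positivity),
        min_le_left _ _, ?_⟩
      have h1 : min (1/2) (Real.sqrt ε / 3) ≤ Real.sqrt ε / 3 := min_le_right _ _
      have h2 : (min (1/2) (Real.sqrt ε / 3)) ^ 2 ≤ (Real.sqrt ε / 3) ^ 2 :=
        pow_le_pow_left₀ (le_min (by norm_num) (by positivity)) h1 2
      have h3 : (Real.sqrt ε / 3) ^ 2 = ε / 9 := by
        rw [div_pow, Real.sq_sqrt hεpos.le]; norm_num
      linarith
    have hxpi : x < π / 2 := by nlinarith [Real.pi_gt_three]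
    obtain ⟨-, hge⟩ := h x hx0 hxpi
    have htu := tan_le hx0 hx12
    have htl := tan_ge hx0 hx12
    set A : ℝ := Real.tan x / x with hA
    set B : ℝ := 3 * (Real.tan x - x) / x ^ 3 with hB
    have hApos : 0 < A := by
      apply div_pos _ hx0
      linarith [Real.lt_tan hx0 hxpi]
    have hAle : A ≤ 1 + x^2/3 + x^4 := by
      rw [hA, div_le_iff₀ hx0]
      nlinarith
    have hBge : 1 + 2*x^2/5 ≤ B := by
      rw [hB, le_div_iff₀ (by positivity : (0:ℝ) < x ^ 3)]
      nlinarith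
    have hBpos : 0 < B := by nlinarith
    -- log comparison
    have hlogA : Real.log A ≤ x^2/3 + x^4 := by
      have := Real.log_le_sub_one_of_pos hApos
      linarith
    have hA1 : 1 ≤ A := by
      rw [hA, le_div_iff₀ hx0]
      linarith [Real.lt_tan hx0 hxpi]
    have hlogA0 : 0 ≤ Real.log A := Real.log_nonneg hA1
    have hlogB : (2*x^2/5) / (1 + 2*x^2/5) ≤ Real.log B := by
      have h1 : 1 - B⁻¹ ≤ Real.log B := Real.one_sub_inv_le_log_of_pos hBpos
      have h2 : B⁻¹ ≤ (1 + 2*x^2/5)⁻¹ := by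
        apply inv_anti₀ (by positivity) hBge
      have h3 : 1 - (1 + 2*x^2/5)⁻¹ = (2*x^2/5) / (1 + 2*x^2/5) := by
        field_simp; ring
      linarith
    have hmain : Real.log A * β < Real.log B := by
      have h1 : Real.log A * β ≤ (x^2/3 + x^4) * β :=
        mul_le_mul_of_nonneg_right hlogA hβ0
      have h2 : (x^2/3 + x^4) * β < (2*x^2/5) / (1 + 2*x^2/5) := by
        have hu : 0 < x^2 := by positivity
        have hu4 : x^2 ≤ 1/4 := by nlinarith
        have huε : x^2 ≤ (6/5 - β)/9 := by rw [← hε]; exact hxε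
        have e4 : (x:ℝ)^4 = (x^2)^2 := by ring
        rw [e4]
        exact key_ineq hu hu4 hβ0 huε
      linarith
    have hcon : A ^ β < B := by
      rw [Real.rpow_def_of_pos hApos, ← Real.exp_log hBpos]
      exact Real.exp_lt_exp.2 hmain
    linarith
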